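/- Let (𝒳, 𝓑, ℙ, f) be a measure-preserving system with decay of correlations against L¹: there exist a Banach space 𝒞 of observables and C > 0 such that for all φ ∈ 𝒞 and ψ ∈ L¹(ℙ), |∫φ·(ψ∘f^n)dℙ − ∫φdℙ·∫ψdℙ| ≤ C‖φ‖_𝒞 ‖ψ‖₁ n^{−2}. Suppose A_n, B_n are measurable sets with 1_{A_n} ∈ 𝒞, ‖1_{A_n}‖_𝒞 ≤ C′, and suppose α_n → ∞ and (k_n) satisfy k_n → ∞, and n²/k_n · ℙ(B_n)ℙ(A_n) → 0 and n·ℙ(B_n)·∑_{j ≥ α_n} j^{−2} → 0, and ℙ(A_n ∩ f^{−j}B_n) = 0 for j < α_n. Then n·∑_{j=1}^{⌊n/k_n⌋} ℙ(A_n ∩ f^{−j} B_n) → 0. -/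

import Mathlib

open MeasureTheory Filter

theorem Dp_prime_from_L1_decay {Ω : Type*} [MeasurableSpace Ω]
    (ℙ : Measure Ω) [IsProbabilityMeasure ℙ]
    (f : Ω → Ω) (hf : MeasurePreserving f ℙ ℙ)
    (𝒞 : Set (Ω → ℝ)) (normC : (Ω → ℝ) → ℝ) (C C' : ℝ) (hC : 0 < C) (hC' : 0 < C')
    (hdc : ∀ φ ∈ 𝒞, ∀ ψ : Ω → ℝ, Integrable ψ ℙ → ∀ n : ℕ, 0 < n →
      |(∫ ω, φ ω * ψ (f^[n] ω) ∂ℙ) - (∫ ω, φ ω ∂ℙ) * ∫ ω, ψ ω ∂ℙ| ≤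
        C * normC φ * (∫ ω, |ψ ω| ∂ℙ) * ((n : ℝ) ^ 2)⁻¹)
    (A B : ℕ → Set Ω) (hA : ∀ n, MeasurableSet (A n)) (hB : ∀ n, MeasurableSet (B n))
    (hmem : ∀ n, (A n).indicator (fun _ => (1 : ℝ)) ∈ 𝒞)
    (hnorm : ∀ n, normC ((A n).indicator fun _ => (1 : ℝ)) ≤ C')
    (α k : ℕ → ℕ)
    (hα : Tendsto α atTop atTop) (hk : Tendsto k atTop atTop)
    (h1 : Tendsto (fun n : ℕ => (n : ℝ) ^ 2 / (k n) * (ℙ (B n)).toReal * (ℙ (A n)).toReal)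
      atTop (nhds 0))
    (h2 : Tendsto (fun n : ℕ => (n : ℝ) * (ℙ (B n)).toReal *
      ∑' j : ℕ, (((α n + j : ℕ) : ℝ) ^ 2)⁻¹) atTop (nhds 0))
    (h3 : ∀ n, ∀ j < α n, ℙ (A n ∩ f^[j] ⁻¹' B n) = 0) :
    Tendsto (fun n : ℕ => (n : ℝ) *
        ∑ j ∈ Finset.Icc 1 (n / k n), (ℙ (A n ∩ f^[j] ⁻¹' B n)).toReal)
      atTop (nhds 0) := by
  classical
  -- key pointwise bound from decay of correlations
  have key : ∀ n j : ℕ, 0 < j →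
      (ℙ (A n ∩ f^[j] ⁻¹' B n)).toReal ≤
        (ℙ (A n)).toReal * (ℙ (B n)).toReal +
          C * C' * (ℙ (B n)).toReal * ((j : ℝ) ^ 2)⁻¹ := by
    intro n j hj
    have hBmeas : MeasurableSet (f^[j] ⁻¹' B n) := (hf.iterate j).measurable (hB n)
    have hint : Integrable ((B n).indicator fun _ => (1 : ℝ)) ℙ :=
      (integrable_const 1).indicator (hB n)
    have h := hdc _ (hmem n) _ hint j hj
    have e1 : (∫ ω, (A n).indicator (fun _ => (1 : ℝ)) ω *
        (B n).indicator (fun _ => (1 : ℝ)) (f^[j] ω) ∂ℙ)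
        = (ℙ (A n ∩ f^[j] ⁻¹' B n)).toReal := by
      have hfun : ∀ ω, (A n).indicator (fun _ => (1 : ℝ)) ω *
          (B n).indicator (fun _ => (1 : ℝ)) (f^[j] ω)
          = (A n ∩ f^[j] ⁻¹' B n).indicator (fun _ => (1 : ℝ)) ω := by
        intro ω
        simp only [Set.indicator_apply, Set.mem_inter_iff, Set.mem_preimage]
        by_cases h1 : ω ∈ A n <;> by_cases h2 : f^[j] ω ∈ B n <;> simp [h1, h2]
      simp_rw [hfun]
      exact integral_indicator_one ((hA n).inter hBmeas)
    have e2 : (∫ ω, (A n).indicator (fun _ => (1 : ℝ)) ω ∂ℙ) = (ℙ (A n)).toReal :=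
      integral_indicator_one (hA n)
    have e3 : (∫ ω, (B n).indicator (fun _ => (1 : ℝ)) ω ∂ℙ) = (ℙ (B n)).toReal :=
      integral_indicator_one (hB n)
    have e4 : (∫ ω, |(B n).indicator (fun _ => (1 : ℝ)) ω| ∂ℙ) = (ℙ (B n)).toReal := by
      have : ∀ ω, |(B n).indicator (fun _ => (1 : ℝ)) ω|
          = (B n).indicator (fun _ => (1 : ℝ)) ω := by
        intro ω; by_cases hω : ω ∈ B n <;> simp [Set.indicator_apply, hω]
      simp_rw [this]; exact integral_indicator_one (hB n)
    rw [e1, e2, e3, e4] at h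
    have hb := (abs_le.mp h).2
    have hnn : 0 ≤ (ℙ (B n)).toReal * ((j : ℝ) ^ 2)⁻¹ :=
      mul_nonneg ENNReal.toReal_nonneg (by positivity)
    have hnorm' : C * normC ((A n).indicator fun _ => (1 : ℝ)) *
        (ℙ (B n)).toReal * ((j : ℝ) ^ 2)⁻¹ ≤ C * C' * (ℙ (B n)).toReal * ((j : ℝ) ^ 2)⁻¹ := by
      have := mul_le_mul_of_nonneg_left (hnorm n) hC.le
      calc C * normC ((A n).indicator fun _ => (1 : ℝ)) * (ℙ (B n)).toReal * ((j : ℝ) ^ 2)⁻¹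
          = (C * normC ((A n).indicator fun _ => (1 : ℝ))) * ((ℙ (B n)).toReal * ((j : ℝ) ^ 2)⁻¹) := by ring
        _ ≤ (C * C') * ((ℙ (B n)).toReal * ((j : ℝ) ^ 2)⁻¹) :=
            mul_le_mul_of_nonneg_right this hnn
        _ = C * C' * (ℙ (B n)).toReal * ((j : ℝ) ^ 2)⁻¹ := by ring
    linarith
  -- summability of the tail series
  have hsumm : ∀ n : ℕ, Summable (fun i : ℕ => (((α n + i : ℕ) : ℝ) ^ 2)⁻¹) := by
    intro n
    have hs : Summable (fun i : ℕ => ((i : ℝ) ^ 2)⁻¹) :=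
      Real.summable_nat_pow_inv.mpr one_lt_two
    have := (summable_nat_add_iff (α n)).mpr hs
    refine this.congr fun i => ?_
    simp [add_comm]
  set T : ℕ → ℝ := fun n => ∑' j : ℕ, (((α n + j : ℕ) : ℝ) ^ 2)⁻¹ with hT
  have hTnn : ∀ n, 0 ≤ T n := fun n => tsum_nonneg fun i => by positivity
  -- sum bound for each n
  have sumbd : ∀ n : ℕ,
      ∑ j ∈ Finset.Icc 1 (n / k n), (ℙ (A n ∩ f^[j] ⁻¹' B n)).toReal ≤
        ((n / k n : ℕ) : ℝ) * ((ℙ (A n)).toReal * (ℙ (B n)).toReal) +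
          C * C' * (ℙ (B n)).toReal * T n := by
    intro n
    set m := n / k n with hm
    set F := (Finset.Icc 1 m).filter (fun j => α n ≤ j) with hF
    have hfilter : ∑ j ∈ Finset.Icc 1 m, (ℙ (A n ∩ f^[j] ⁻¹' B n)).toReal
        = ∑ j ∈ F, (ℙ (A n ∩ f^[j] ⁻¹' B n)).toReal := by
      refine (Finset.sum_filter_of_ne fun j _ hne => ?_).symm
      by_contra hcon
      push_neg at hcon
      exact hne (by simp [h3 n j hcon])
    rw [hfilter]
    have step1 : ∑ j ∈ F, (ℙ (A n ∩ f^[j] ⁻¹' B n)).toReal ≤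
        ∑ j ∈ F, ((ℙ (A n)).toReal * (ℙ (B n)).toReal +
          C * C' * (ℙ (B n)).toReal * ((j : ℝ) ^ 2)⁻¹) := by
      refine Finset.sum_le_sum fun j hj => ?_
      have hj1 : 1 ≤ j := (Finset.mem_Icc.mp (Finset.mem_filter.mp hj).1).1
      exact key n j hj1
    rw [Finset.sum_add_distrib, Finset.sum_const, ← Finset.mul_sum] at step1
    have hcard : (F.card : ℝ) ≤ (m : ℝ) := by
      have : F.card ≤ (Finset.Icc 1 m).card := Finset.card_filter_le _ _
      have h2 : (Finset.Icc 1 m).card = m := by simp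
      exact_mod_cast this.trans_eq h2
    have htail : ∑ j ∈ F, ((j : ℝ) ^ 2)⁻¹ ≤ T n := by
      have himg : ∑ j ∈ F, ((j : ℝ) ^ 2)⁻¹
          = ∑ i ∈ F.image (fun j => j - α n), (((α n + i : ℕ) : ℝ) ^ 2)⁻¹ := by
        rw [Finset.sum_image]
        · refine Finset.sum_congr rfl fun j hj => ?_
          have hαj : α n ≤ j := (Finset.mem_filter.mp hj).2
          rw [Nat.add_sub_cancel' hαj]
        · intro a ha b hb hab
          have hαa : α n ≤ a := (Finset.mem_filter.mp ha).2
          have hαb : α n ≤ b := (Finset.mem_filter.mp hb).2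
          simp only at hab
          omega
      rw [himg]
      exact Summable.sum_le_tsum _ (fun i _ => by positivity) (hsumm n)
    have hnn : 0 ≤ C * C' * (ℙ (B n)).toReal :=
      mul_nonneg (mul_nonneg hC.le hC'.le) ENNReal.toReal_nonneg
    have hPnn : 0 ≤ (ℙ (A n)).toReal * (ℙ (B n)).toReal :=
      mul_nonneg ENNReal.toReal_nonneg ENNReal.toReal_nonneg
    calc ∑ j ∈ F, (ℙ (A n ∩ f^[j] ⁻¹' B n)).toReal
        ≤ (F.card : ℝ) * ((ℙ (A n)).toReal * (ℙ (B n)).toReal) +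
            C * C' * (ℙ (B n)).toReal * ∑ j ∈ F, ((j : ℝ) ^ 2)⁻¹ := by
          simpa [nsmul_eq_mul, mul_assoc] using step1
      _ ≤ (m : ℝ) * ((ℙ (A n)).toReal * (ℙ (B n)).toReal) +
            C * C' * (ℙ (B n)).toReal * T n := by
          gcongr
  -- squeeze
  have hub : ∀ n : ℕ, (n : ℝ) *
      ∑ j ∈ Finset.Icc 1 (n / k n), (ℙ (A n ∩ f^[j] ⁻¹' B n)).toReal ≤
        (n : ℝ) ^ 2 / (k n) * (ℙ (B n)).toReal * (ℙ (A n)).toReal +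
          C * C' * ((n : ℝ) * (ℙ (B n)).toReal * T n) := by
    intro n
    have h0 : (0 : ℝ) ≤ n := Nat.cast_nonneg n
    have hs := mul_le_mul_of_nonneg_left (sumbd n) h0
    have hdiv : ((n / k n : ℕ) : ℝ) ≤ (n : ℝ) / (k n : ℝ) := Nat.cast_div_le
    have hPnn : 0 ≤ (ℙ (A n)).toReal * (ℙ (B n)).toReal :=
      mul_nonneg ENNReal.toReal_nonneg ENNReal.toReal_nonneg
    have h4 : (n : ℝ) * (((n / k n : ℕ) : ℝ) * ((ℙ (A n)).toReal * (ℙ (B n)).toReal))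
        ≤ (n : ℝ) * (((n : ℝ) / (k n : ℝ)) * ((ℙ (A n)).toReal * (ℙ (B n)).toReal)) := by
      gcongr
    have heq : (n : ℝ) * (((n : ℝ) / (k n : ℝ)) * ((ℙ (A n)).toReal * (ℙ (B n)).toReal))
        = (n : ℝ) ^ 2 / (k n) * (ℙ (B n)).toReal * (ℙ (A n)).toReal := by
      ring
    nlinarith [hs, h4]
  have hlb : ∀ n : ℕ, (0 : ℝ) ≤ (n : ℝ) *
      ∑ j ∈ Finset.Icc 1 (n / k n), (ℙ (A n ∩ f^[j] ⁻¹' B n)).toReal := by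
    intro n
    exact mul_nonneg (Nat.cast_nonneg n)
      (Finset.sum_nonneg fun j _ => ENNReal.toReal_nonneg)
  have hlim : Tendsto (fun n : ℕ =>
      (n : ℝ) ^ 2 / (k n) * (ℙ (B n)).toReal * (ℙ (A n)).toReal +
        C * C' * ((n : ℝ) * (ℙ (B n)).toReal * T n)) atTop (nhds 0) := by
    have h2' : Tendsto (fun n : ℕ => C * C' * ((n : ℝ) * (ℙ (B n)).toReal * T n))
        atTop (nhds 0) := by
      have := h2.const_mul (C * C')
      rwa [mul_zero] at this
    have := h1.add h2'
    rwa [add_zero] at this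
  exact squeeze_zero hlb hub hlim
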